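/- A nonempty subset L of the graph group G_F is convex if and only if for each a ∈ G the set aL := {ax : x ∈ L} has a unique minimal element with respect to the partial order ≤. -/

import Mathlib

open Pointwise

namespace GraphGroupPaper

/-- The set of commutator relators: `gᵢ` and `gⱼ` commute for every pair of distinct
`i, j` with `{i,j} ∉ F`. -/
def Rels (k : ℕ) (F : Set (Sym2 (Fin k))) : Set (FreeGroup (Fin k)) :=
  {w | ∃ i j : Fin k, i ≠ j ∧ s(i, j) ∉ F ∧
      w = FreeGroup.of i * FreeGroup.of j * (FreeGroup.of i)⁻¹ * (FreeGroup.of j)⁻¹}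

/-- The graph group `G_F` with generators `g₁, …, g_k` and relations `gᵢgⱼ = gⱼgᵢ`
for all distinct `i, j` with `{i,j} ∉ F`. -/
abbrev Grp (k : ℕ) (F : Set (Sym2 (Fin k))) := PresentedGroup (Rels k F)

/-- The generator `gᵢ` of the graph group. -/
def gen (k : ℕ) (F : Set (Sym2 (Fin k))) (i : Fin k) : Grp k F :=
  PresentedGroup.of i

/-- The group element corresponding to a symbol: `(i, true)` stands for `gᵢ`,
`(i, false)` stands for `gᵢ⁻¹`. -/
def sym (k : ℕ) (F : Set (Sym2 (Fin k))) (α : Fin k × Bool) : Grp k F :=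
  if α.2 then gen k F α.1 else (gen k F α.1)⁻¹

/-- The product of the word `l` of symbols, as an element of the graph group. -/
def wordProd (k : ℕ) (F : Set (Sym2 (Fin k))) (l : List (Fin k × Bool)) : Grp k F :=
  (l.map (sym k F)).prod

/-- `|x|` : the length of a shortest word in the symbols representing `x`. -/
noncomputable def len {k : ℕ} {F : Set (Sym2 (Fin k))} (x : Grp k F) : ℕ :=
  sInf {n | ∃ l : List (Fin k × Bool), wordProd k F l = x ∧ l.length = n}

/-- The partial order on `G_F`:  `x ≤ y` iff `|y| = |x| + |x⁻¹y|`. -/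
def le {k : ℕ} {F : Set (Sym2 (Fin k))} (x y : Grp k F) : Prop :=
  len y = len x + len (x⁻¹ * y)

/-- `m` is the meet `x ∧ y` (greatest lower bound w.r.t. `le`). -/
def IsMeet {k : ℕ} {F : Set (Sym2 (Fin k))} (x y m : Grp k F) : Prop :=
  le m x ∧ le m y ∧ ∀ w, le w x → le w y → le w m

/-- `j` is the (finite) join `x ∨ y` (least upper bound w.r.t. `le`);
`x ∨ y` is finite iff such a `j` exists. -/
def IsJoin {k : ℕ} {F : Set (Sym2 (Fin k))} (x y j : Grp k F) : Prop :=
  le x j ∧ le y j ∧ ∀ w, le x w → le y w → le j w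

/-- `j` is the (finite) join of the set `S`. -/
def IsJoinSet {k : ℕ} {F : Set (Sym2 (Fin k))} (S : Set (Grp k F)) (j : Grp k F) : Prop :=
  (∀ s ∈ S, le s j) ∧ ∀ w, (∀ s ∈ S, le s w) → le j w

/-- `y` is a segment of `a` if `a = x·y·z` for some `x, z`. -/
def Segment {k : ℕ} {F : Set (Sym2 (Fin k))} (y a : Grp k F) : Prop :=
  ∃ x z, a = x * y * z ∧ len a = len x + len y + len z

/-- The left-invariant metric `dist(x,y) = |x⁻¹y|`. -/
noncomputable def dist {k : ℕ} {F : Set (Sym2 (Fin k))} (x y : Grp k F) : ℕ :=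
  len (x⁻¹ * y)

/-- A nonempty set `L` is convex if `x, z ∈ L` and `dist(x,y) + dist(y,z) = dist(x,z)`
imply `y ∈ L`. -/
def ConvexSet {k : ℕ} {F : Set (Sym2 (Fin k))} (L : Set (Grp k F)) : Prop :=
  L.Nonempty ∧ ∀ x z y : Grp k F, x ∈ L → z ∈ L →
    dist x y + dist y z = dist x z → y ∈ L

/-- An ideal: nonempty, downward closed, and closed under finite joins. -/
def IdealSet {k : ℕ} {F : Set (Sym2 (Fin k))} (I : Set (Grp k F)) : Prop :=
  I.Nonempty ∧ (∀ x ∈ I, ∀ y, le y x → y ∈ I) ∧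
    (∀ x ∈ I, ∀ y ∈ I, ∀ j, IsJoin x y j → j ∈ I)

/-- `H` is closed if both `H` and `H⁻¹` are ideals. -/
def ClosedSet {k : ℕ} {F : Set (Sym2 (Fin k))} (H : Set (Grp k F)) : Prop :=
  IdealSet H ∧ IdealSet H⁻¹

/-- `m` is a minimal element of `S` w.r.t. `le`. -/
def MinimalIn {k : ℕ} {F : Set (Sym2 (Fin k))} (S : Set (Grp k F)) (m : Grp k F) : Prop :=
  m ∈ S ∧ ∀ x ∈ S, le x m → x = m

/-- `l` is a reduced (i.e. shortest) word representing `x`. -/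
def MinWord {k : ℕ} {F : Set (Sym2 (Fin k))} (x : Grp k F) (l : List (Fin k × Bool)) : Prop :=
  wordProd k F l = x ∧ l.length = len x

open Classical in
/-- `#_α(x)`: the number of occurrences of the symbol `α` (not counting `α⁻¹`)
in a reduced word representing `x`. -/
noncomputable def symCount {k : ℕ} {F : Set (Sym2 (Fin k))} (α : Fin k × Bool)
    (x : Grp k F) : ℕ :=
  if h : ∃ l, MinWord x l then h.choose.count α else 0

/-- The symbol `α` occurs in `x`. -/
def Occurs {k : ℕ} {F : Set (Sym2 (Fin k))} (α : Fin k × Bool) (x : Grp k F) : Prop :=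
  0 < symCount α x

/-- `α` is a maximal symbol of `x`, i.e. `xα⁻¹ ≤ x`. -/
def MaxSym {k : ℕ} {F : Set (Sym2 (Fin k))} (α : Fin k × Bool) (x : Grp k F) : Prop :=
  le (x * (sym k F α)⁻¹) x

/-- A peak: an element with precisely one maximal symbol. -/
def IsPeak {k : ℕ} {F : Set (Sym2 (Fin k))} (p : Grp k F) : Prop :=
  ∃! α : Fin k × Bool, MaxSym α p

/-- An `α`-peak: a peak whose unique maximal symbol is `α`. -/
def AlphaPeak {k : ℕ} {F : Set (Sym2 (Fin k))} (α : Fin k × Bool) (p : Grp k F) : Prop :=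
  MaxSym α p ∧ ∀ β, MaxSym β p → β = α

/-- The set of generator indices occurring in `b`. -/
def Support {k : ℕ} {F : Set (Sym2 (Fin k))} (b : Grp k F) : Set (Fin k) :=
  {i | Occurs (i, true) b ∨ Occurs (i, false) b}

/-- `b` is connected: the generators occurring in `b` induce a connected subgraph of
the graph `([k], F)`. -/
def Conn {k : ℕ} {F : Set (Sym2 (Fin k))} (b : Grp k F) : Prop :=
  (SimpleGraph.induce (Support b) (SimpleGraph.fromEdgeSet F)).Connected

/-- `b` is cyclically reduced: `b ∧ b⁻¹ = 1`. -/
def CycRed {k : ℕ} {F : Set (Sym2 (Fin k))} (b : Grp k F) : Prop :=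
  IsMeet b b⁻¹ 1

/-! ### Auxiliary development: letters and words -/

variable {k : ℕ} {F : Set (Sym2 (Fin k))}

/-- Inverse of a letter. -/
def invL (a : Fin k × Bool) : Fin k × Bool := (a.1, !a.2)

@[simp] lemma invL_invL (a : Fin k × Bool) : invL (invL a) = a := by
  cases a with | mk i b => cases b <;> rfl

@[simp] lemma invL_fst (a : Fin k × Bool) : (invL a).1 = a.1 := rfl

/-- Two letters commute. -/
def CommL (F : Set (Sym2 (Fin k))) (a b : Fin k × Bool) : Prop :=
  a.1 ≠ b.1 ∧ s(a.1, b.1) ∉ F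

lemma CommL.symm {a b : Fin k × Bool} (h : CommL F a b) : CommL F b a :=
  ⟨h.1.symm, by rw [Sym2.eq_swap]; exact h.2⟩

@[simp] lemma commL_invL_left {a b : Fin k × Bool} : CommL F (invL a) b ↔ CommL F a b := Iff.rfl

@[simp] lemma commL_invL_right {a b : Fin k × Bool} : CommL F a (invL b) ↔ CommL F a b := Iff.rfl

lemma commL_ne {a b : Fin k × Bool} (h : CommL F a b) : a.1 ≠ b.1 := h.1

lemma wordProd_nil : wordProd k F [] = 1 := rfl

lemma wordProd_cons (a : Fin k × Bool) (l : List (Fin k × Bool)) :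
    wordProd k F (a :: l) = sym k F a * wordProd k F l := by
  simp [wordProd]

lemma wordProd_append (l₁ l₂ : List (Fin k × Bool)) :
    wordProd k F (l₁ ++ l₂) = wordProd k F l₁ * wordProd k F l₂ := by
  simp [wordProd]

lemma wordProd_singleton (a : Fin k × Bool) : wordProd k F [a] = sym k F a := by
  simp [wordProd]

lemma sym_invL (a : Fin k × Bool) : sym k F (invL a) = (sym k F a)⁻¹ := by
  cases a with | mk i b => cases b <;> simp [sym, invL]

lemma gen_commute {i j : Fin k} (hij : i ≠ j) (hF : s(i, j) ∉ F) :
    Commute (gen k F i) (gen k F j) := by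
  rw [← commutatorElement_eq_one_iff_commute]
  have h1 : (FreeGroup.of i * FreeGroup.of j * (FreeGroup.of i)⁻¹ * (FreeGroup.of j)⁻¹ :
      FreeGroup (Fin k)) ∈ Subgroup.normalClosure (Rels k F) :=
    Subgroup.subset_normalClosure ⟨i, j, hij, hF, rfl⟩
  have h2 : PresentedGroup.mk (Rels k F)
      (FreeGroup.of i * FreeGroup.of j * (FreeGroup.of i)⁻¹ * (FreeGroup.of j)⁻¹) = 1 :=
    (QuotientGroup.eq_one_iff _).2 h1
  simpa [gen, PresentedGroup.of, commutatorElement_def, map_mul, map_inv] using h2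

lemma sym_commute {a b : Fin k × Bool} (h : CommL F a b) :
    Commute (sym k F a) (sym k F b) := by
  have hg : Commute (gen k F a.1) (gen k F b.1) := gen_commute h.1 h.2
  cases a with | mk i ba =>
  cases b with | mk j bb =>
  cases ba <;> cases bb <;> simp only [sym, if_true, if_false, Bool.false_eq_true] <;>
    first
      | exact hg
      | exact hg.inv_left
      | exact hg.inv_right
      | exact hg.inv_left.inv_right

lemma wordProd_commute {a : Fin k × Bool} {v : List (Fin k × Bool)}
    (h : ∀ b ∈ v, CommL F a b) : Commute (sym k F a) (wordProd k F v) := by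
  induction v with
  | nil => rw [wordProd_nil]; exact Commute.one_right _
  | cons c t ih =>
      rw [wordProd_cons]
      exact (sym_commute (h c (by simp))).mul_right (ih fun b hb => h b (by simp [hb]))

lemma wordProd_cancel {σ : Fin k × Bool} {u v : List (Fin k × Bool)}
    (h : ∀ b ∈ v, CommL F σ b) :
    wordProd k F (u ++ invL σ :: v) * sym k F σ = wordProd k F (u ++ v) := by
  have hc : sym k F σ * wordProd k F v = wordProd k F v * sym k F σ := (wordProd_commute h).eq
  calc wordProd k F (u ++ invL σ :: v) * sym k F σ
      = wordProd k F u * ((sym k F σ)⁻¹ * (wordProd k F v * sym k F σ)) := by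
        rw [wordProd_append, wordProd_cons, sym_invL]; group
    _ = wordProd k F u * ((sym k F σ)⁻¹ * (sym k F σ * wordProd k F v)) := by rw [hc]
    _ = wordProd k F (u ++ v) := by rw [wordProd_append]; group

lemma wordProd_cp {a : Fin k × Bool} {v : List (Fin k × Bool)}
    (h : ∀ b ∈ v, CommL F a b) (u z : List (Fin k × Bool)) :
    wordProd k F (u ++ a :: (v ++ invL a :: z)) = wordProd k F ((u ++ v) ++ z) := by
  have hc : sym k F a * wordProd k F v = wordProd k F v * sym k F a := (wordProd_commute h).eq
  calc wordProd k F (u ++ a :: (v ++ invL a :: z))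
      = wordProd k F u * (sym k F a * wordProd k F v) * ((sym k F a)⁻¹ * wordProd k F z) := by
        rw [wordProd_append, wordProd_cons, wordProd_append, wordProd_cons, sym_invL]; group
    _ = wordProd k F u * (wordProd k F v * sym k F a) * ((sym k F a)⁻¹ * wordProd k F z) := by
        rw [hc]
    _ = wordProd k F ((u ++ v) ++ z) := by rw [wordProd_append, wordProd_append]; group

/-! ### Length -/

lemma exists_word (x : Grp k F) : ∃ l : List (Fin k × Bool), wordProd k F l = x := by
  obtain ⟨z, rfl⟩ := PresentedGroup.mk_surjective (Rels k F) x
  · refine ⟨z.toWord, ?_⟩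
    have hz : FreeGroup.mk z.toWord = z := FreeGroup.mk_toWord
    conv_rhs => rw [← hz]
    generalize z.toWord = l
    induction l with
    | nil => rfl
    | cons a t ih =>
        have h1 : FreeGroup.mk (a :: t) = FreeGroup.mk [a] * FreeGroup.mk t := by
          rw [FreeGroup.mul_mk]; rfl
        rw [wordProd_cons, h1, map_mul, ih]
        congr 1
        cases a with | mk i b =>
          cases b
          · have : (FreeGroup.mk [(i, false)] : FreeGroup (Fin k)) = (FreeGroup.of i)⁻¹ := by
              rw [show (FreeGroup.of i : FreeGroup (Fin k)) = FreeGroup.mk [(i, true)] from rfl,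
                FreeGroup.inv_mk]
              rfl
            rw [this, map_inv]
            simp [sym, gen, PresentedGroup.of]
          · simp [sym, gen, PresentedGroup.of, FreeGroup.of]

lemma lenSet_nonempty (x : Grp k F) :
    {n | ∃ l : List (Fin k × Bool), wordProd k F l = x ∧ l.length = n}.Nonempty := by
  obtain ⟨l, hl⟩ := exists_word x
  exact ⟨l.length, l, hl, rfl⟩

lemma exists_min_word (x : Grp k F) :
    ∃ l : List (Fin k × Bool), wordProd k F l = x ∧ l.length = len x :=
  Nat.sInf_mem (lenSet_nonempty x)

lemma len_le {x : Grp k F} {l : List (Fin k × Bool)} (h : wordProd k F l = x) :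
    len x ≤ l.length :=
  Nat.sInf_le ⟨l, h, rfl⟩

lemma len_one : len (1 : Grp k F) = 0 :=
  Nat.le_zero.1 (len_le wordProd_nil)

lemma eq_one_of_len_eq_zero {x : Grp k F} (h : len x = 0) : x = 1 := by
  obtain ⟨l, hl, hlen⟩ := exists_min_word x
  rw [h] at hlen
  rw [List.length_eq_zero_iff] at hlen
  rw [hlen] at hl
  exact hl.symm.trans wordProd_nil

lemma len_mul_le (x y : Grp k F) : len (x * y) ≤ len x + len y := by
  obtain ⟨l₁, h₁, e₁⟩ := exists_min_word x
  obtain ⟨l₂, h₂, e₂⟩ := exists_min_word y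
  have : wordProd k F (l₁ ++ l₂) = x * y := by rw [wordProd_append, h₁, h₂]
  calc len (x * y) ≤ (l₁ ++ l₂).length := len_le this
    _ = len x + len y := by rw [List.length_append, e₁, e₂]

lemma wordProd_revInv (l : List (Fin k × Bool)) :
    wordProd k F (l.reverse.map invL) = (wordProd k F l)⁻¹ := by
  induction l with
  | nil => simp [wordProd_nil]
  | cons a t ih =>
      rw [List.reverse_cons, List.map_append, wordProd_append, ih, wordProd_cons]
      simp [wordProd_singleton, sym_invL]

lemma len_inv (x : Grp k F) : len x⁻¹ = len x := by
  have key : ∀ y : Grp k F, len y⁻¹ ≤ len y := by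
    intro y
    obtain ⟨l, hl, he⟩ := exists_min_word y
    have : wordProd k F (l.reverse.map invL) = y⁻¹ := by rw [wordProd_revInv, hl]
    calc len y⁻¹ ≤ (l.reverse.map invL).length := len_le this
      _ = len y := by simp [he]
  exact le_antisymm (key x) (by simpa using key x⁻¹)
/-! ### Cancelling pairs and reduced words -/

/-- `w` has a cancelling pair. -/
def CP (F : Set (Sym2 (Fin k))) (w : List (Fin k × Bool)) : Prop :=
  ∃ u a v z, (∀ b ∈ v, CommL F a b) ∧ w = u ++ a :: (v ++ invL a :: z)

/-- `w` is reduced. -/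
def Red (F : Set (Sym2 (Fin k))) (w : List (Fin k × Bool)) : Prop := ¬ CP F w

lemma cp_shorten {w : List (Fin k × Bool)} (h : CP F w) :
    ∃ w', wordProd k F w' = wordProd k F w ∧ w'.length + 2 = w.length := by
  obtain ⟨u, a, v, z, hc, rfl⟩ := h
  refine ⟨(u ++ v) ++ z, (wordProd_cp hc u z).symm, ?_⟩
  simp; omega

lemma red_of_min {w : List (Fin k × Bool)} (h : w.length = len (wordProd k F w)) :
    Red F w := by
  intro hcp
  obtain ⟨w', he, hl⟩ := cp_shorten hcp
  have := len_le he
  omega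

lemma red_cons {a : Fin k × Bool} {w : List (Fin k × Bool)} (h : Red F (a :: w)) :
    Red F w := by
  rintro ⟨u, c, v, z, hc, hw⟩
  exact h ⟨a :: u, c, v, z, hc, by rw [hw]; rfl⟩

lemma red_reverse {w : List (Fin k × Bool)} (h : Red F w) : Red F w.reverse := by
  rintro ⟨u, a, v, z, hc, hw⟩
  apply h
  refine ⟨z.reverse, invL a, v.reverse, u.reverse, ?_, ?_⟩
  · intro b hb
    exact hc b (by simpa using hb)
  · have h2 := congrArg List.reverse hw
    rw [List.reverse_reverse] at h2
    rw [h2]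
    simp [List.reverse_append]

/-! ### The push operation -/

/-- `w` admits a cancellation of the letter `σ` appended at the end. -/
def HasDec (F : Set (Sym2 (Fin k))) (σ : Fin k × Bool) (w : List (Fin k × Bool)) : Prop :=
  ∃ p : List (Fin k × Bool) × List (Fin k × Bool),
    (∀ b ∈ p.2, CommL F σ b) ∧ w = p.1 ++ invL σ :: p.2

open Classical in
/-- Multiply the word `w` by the letter `σ` on the right, cancelling if possible. -/
noncomputable def push (F : Set (Sym2 (Fin k))) (σ : Fin k × Bool)
    (w : List (Fin k × Bool)) : List (Fin k × Bool) :=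
  if h : HasDec F σ w then h.choose.1 ++ h.choose.2 else w ++ [σ]

lemma dec_unique_aux {σ : Fin k × Bool} {v1 u v2 : List (Fin k × Bool)}
    (c1 : ∀ b ∈ v1, CommL F σ b) (h : invL σ :: v1 = u ++ invL σ :: v2) : u = [] := by
  cases u with
  | nil => rfl
  | cons x t =>
      rw [List.cons_append] at h
      injection h with h1 h2
      have := (c1 (invL σ) (by rw [h2]; simp)).1
      simp at this

lemma dec_unique {σ : Fin k × Bool} {u1 v1 u2 v2 : List (Fin k × Bool)}
    (c1 : ∀ b ∈ v1, CommL F σ b) (c2 : ∀ b ∈ v2, CommL F σ b)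
    (h : u1 ++ invL σ :: v1 = u2 ++ invL σ :: v2) : u1 = u2 ∧ v1 = v2 := by
  rcases List.append_eq_append_iff.1 h with ⟨t, ht1, ht2⟩ | ⟨t, ht1, ht2⟩
  · have ht : t = [] := dec_unique_aux c1 ht2
    subst ht
    rw [List.append_nil] at ht1
    refine ⟨ht1.symm, ?_⟩
    rw [List.nil_append] at ht2
    injection ht2
  · have ht : t = [] := dec_unique_aux c2 ht2
    subst ht
    rw [List.append_nil] at ht1
    refine ⟨ht1, ?_⟩
    rw [List.nil_append] at ht2
    injection ht2 with _ h2
    exact h2.symm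

lemma push_of_dec {σ : Fin k × Bool} {u v w : List (Fin k × Bool)}
    (c : ∀ b ∈ v, CommL F σ b) (hw : w = u ++ invL σ :: v) : push F σ w = u ++ v := by
  have hd : HasDec F σ w := ⟨(u, v), c, hw⟩
  rw [push, dif_pos hd]
  obtain ⟨h1, h2⟩ := dec_unique hd.choose_spec.1 c (hd.choose_spec.2.symm.trans hw)
  rw [h1, h2]

lemma push_of_not_dec {σ : Fin k × Bool} {w : List (Fin k × Bool)} (h : ¬ HasDec F σ w) :
    push F σ w = w ++ [σ] := by
  rw [push, dif_neg h]

lemma wordProd_push (σ : Fin k × Bool) (w : List (Fin k × Bool)) :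
    wordProd k F (push F σ w) = wordProd k F w * sym k F σ := by
  by_cases h : HasDec F σ w
  · obtain ⟨⟨u, v⟩, c, hw⟩ := h
    rw [push_of_dec c hw, hw]
    exact (wordProd_cancel c).symm
  · rw [push_of_not_dec h, wordProd_append, wordProd_singleton]

lemma red_push {σ : Fin k × Bool} {w : List (Fin k × Bool)} (h : Red F w) :
    Red F (push F σ w) := by
  by_cases hd : HasDec F σ w
  · obtain ⟨⟨u, v⟩, c, hw⟩ := hd
    rw [push_of_dec c hw]
    rintro ⟨p, a, q, r, cq, he⟩
    apply h
    rcases List.append_eq_append_iff.1 he with ⟨t, ht1, ht2⟩ | ⟨t, ht1, ht2⟩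
    · -- both letters inside v
      exact ⟨u ++ invL σ :: t, a, q, r, cq, by rw [hw, ht2]; simp⟩
    · -- ht1 : u = p ++ t, ht2 : a :: (q ++ invL a :: r) = t ++ v
      cases t with
      | nil =>
          have hv : v = a :: (q ++ invL a :: r) := by simpa using ht2.symm
          exact ⟨u ++ [invL σ], a, q, r, cq, by rw [hw, hv]; simp⟩
      | cons x t' =>
          injection ht2 with hx ht2'
          rcases List.append_eq_append_iff.1 ht2' with ⟨s, hs1, hs2⟩ | ⟨s, hs1, hs2⟩
          · -- hs1 : t' = q ++ s, hs2 : invL a :: r = s ++ v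
            cases s with
            | nil =>
                have hv : v = invL a :: r := by simpa using hs2.symm
                have hcomm : CommL F a (invL σ) := by
                  have h1 : CommL F σ (invL a) := c _ (by rw [hv]; simp)
                  exact (CommL.symm h1 : CommL F (invL a) σ)
                refine ⟨p, a, q ++ [invL σ], r, ?_, ?_⟩
                · intro b hb
                  rcases List.mem_append.1 hb with hb | hb
                  · exact cq b (by simp [hb])
                  · simp at hb
                    rw [hb]
                    exact hcomm
                · rw [hw, ht1, ← hx, hs1, hv]
                  simp
            | cons y s' =>
                injection hs2 with hy hs2'
                refine ⟨p, a, q, s' ++ invL σ :: v, cq, ?_⟩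
                rw [hw, ht1, ← hx, hs1, ← hy]
                simp
          · -- hs1 : q = t' ++ s, hs2 : v = s ++ invL a :: r
            have hcomm : CommL F a (invL σ) := by
              have h1 : CommL F σ (invL a) := c _ (by rw [hs2]; simp)
              exact (CommL.symm h1 : CommL F (invL a) σ)
            refine ⟨p, a, t' ++ invL σ :: s, r, ?_, ?_⟩
            · intro b hb
              rcases List.mem_append.1 hb with hb | hb
              · exact cq b (by rw [hs1]; exact List.mem_append.2 (Or.inl hb))
              · rcases List.mem_cons.1 hb with hb | hb
                · rw [hb]; exact hcomm
                · exact cq b (by rw [hs1]; exact List.mem_append.2 (Or.inr hb))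
            · rw [hw, ht1, ← hx, hs2]
              simp
  · rw [push_of_not_dec hd]
    rintro ⟨p, a, q, r, cq, he⟩
    rcases List.eq_nil_or_concat r with rfl | ⟨r', b, rfl⟩
    · have h2 : w ++ [σ] = (p ++ a :: q) ++ [invL a] := by rw [he]; simp
      have h3 := List.append_inj' h2 rfl
      obtain ⟨hw', hσ⟩ := h3
      have hσ' : σ = invL a := by injection hσ
      apply hd
      have ha : a = invL σ := by rw [hσ']; simp
      refine ⟨(p, q), ?_, by rw [hw', ha]⟩
      intro b hb
      have := cq b hb
      rw [ha] at this
      exact this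
    · apply h
      have h2 : w ++ [σ] = (p ++ a :: (q ++ invL a :: r')) ++ [b] := by rw [he]; simp
      have h3 := List.append_inj' h2 rfl
      exact ⟨p, a, q, r', cq, h3.1⟩
/-! ### Swap equivalence -/

/-- Transposition of two adjacent commuting letters. -/
def SwapR (F : Set (Sym2 (Fin k))) (w1 w2 : List (Fin k × Bool)) : Prop :=
  ∃ u a b v, CommL F a b ∧ w1 = u ++ a :: b :: v ∧ w2 = u ++ b :: a :: v

/-- Equivalence generated by adjacent commuting transpositions. -/
abbrev SwEq (F : Set (Sym2 (Fin k))) := Relation.EqvGen (SwapR F)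

lemma swapR_symm {w1 w2 : List (Fin k × Bool)} (h : SwapR F w1 w2) : SwapR F w2 w1 := by
  obtain ⟨u, a, b, v, hc, h1, h2⟩ := h
  exact ⟨u, b, a, v, hc.symm, h2, h1⟩

lemma swapR_length {w1 w2 : List (Fin k × Bool)} (h : SwapR F w1 w2) :
    w1.length = w2.length := by
  obtain ⟨u, a, b, v, hc, rfl, rfl⟩ := h
  simp

lemma sweq_length {w1 w2 : List (Fin k × Bool)} (h : SwEq F w1 w2) :
    w1.length = w2.length := by
  induction h with
  | rel _ _ h => exact swapR_length h
  | refl => rfl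
  | symm _ _ _ ih => exact ih.symm
  | trans _ _ _ _ _ ih1 ih2 => exact ih1.trans ih2

lemma sweq_comm_block {σ : Fin k × Bool} (v : List (Fin k × Bool)) :
    ∀ u, (∀ b ∈ v, CommL F σ b) → SwEq F (u ++ σ :: v) (u ++ (v ++ [σ])) := by
  induction v with
  | nil => intro u _; exact .refl _
  | cons c t ih =>
      intro u hc
      have h1 : SwapR F (u ++ σ :: c :: t) (u ++ c :: σ :: t) :=
        ⟨u, σ, c, t, hc c (by simp), rfl, rfl⟩
      have h2 := ih (u ++ [c]) (fun b hb => hc b (by simp [hb]))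
      have e1 : (u ++ [c]) ++ σ :: t = u ++ c :: σ :: t := by simp
      have e2 : (u ++ [c]) ++ (t ++ [σ]) = u ++ ((c :: t) ++ [σ]) := by simp
      rw [e1, e2] at h2
      exact .trans _ _ _ (.rel _ _ h1) h2

lemma hasDec_swap {σ : Fin k × Bool} {w1 w2 : List (Fin k × Bool)}
    (hs : SwapR F w1 w2) (hd : HasDec F σ w1) : HasDec F σ w2 := by
  obtain ⟨u, a, b, v, hc, h1, h2⟩ := hs
  obtain ⟨⟨p, q⟩, cq, hp⟩ := hd
  have he : p ++ invL σ :: q = u ++ a :: b :: v := hp.symm.trans h1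
  rcases List.append_eq_append_iff.1 he with ⟨t, ht1, ht2⟩ | ⟨t, ht1, ht2⟩
  · cases t with
    | nil =>
        rw [List.append_nil] at ht1
        injection ht2 with hα hq
        refine ⟨(p ++ [b], v), fun x hx => cq x (by rw [hq]; simp [hx]), ?_⟩
        rw [h2, ht1, ← hα]
        simp
    | cons x t' =>
        injection ht2 with hx hq
        refine ⟨(p, t' ++ b :: a :: v), ?_, by rw [h2, ht1, ← hx]; simp⟩
        intro y hy
        apply cq
        rw [hq]
        simp at hy ⊢
        tauto
  · cases t with
    | nil =>
        rw [List.append_nil] at ht1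
        injection ht2 with ha hbv
        refine ⟨(u ++ [b], v), fun x hx => cq x (by rw [← hbv]; simp [hx]), ?_⟩
        rw [h2, ← ha]
        simp
    | cons x t'' =>
        injection ht2 with hxa ht2'
        cases t'' with
        | nil =>
            injection ht2' with hb hq
            refine ⟨(u, a :: q), ?_, ?_⟩
            · intro y hy
              rcases List.mem_cons.1 hy with h4 | h4
              · have h3 : CommL F a (invL σ) := by rw [← hb]; exact hc
                rw [h4]
                exact (h3.symm : CommL F (invL σ) a)
              · exact cq y h4
            · rw [h2, hb, hq]
        | cons y t3 =>
            injection ht2' with hby ht3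
            refine ⟨(u ++ b :: a :: t3, q), fun x hx => cq x hx, ?_⟩
            rw [h2, ht3]
            simp

lemma push_swapR {σ : Fin k × Bool} {w1 w2 : List (Fin k × Bool)} (hs : SwapR F w1 w2) :
    SwEq F (push F σ w1) (push F σ w2) := by
  by_cases hd : HasDec F σ w1
  · obtain ⟨u, a, b, v, hc, h1, h2⟩ := hs
    obtain ⟨⟨p, q⟩, cq, hp⟩ := hd
    have he : p ++ invL σ :: q = u ++ a :: b :: v := hp.symm.trans h1
    rcases List.append_eq_append_iff.1 he with ⟨t, ht1, ht2⟩ | ⟨t, ht1, ht2⟩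
    · cases t with
      | nil =>
          rw [List.append_nil] at ht1
          injection ht2 with hα hq
          have c2 : ∀ x ∈ v, CommL F σ x := fun x hx => cq x (by rw [hq]; simp [hx])
          rw [push_of_dec cq hp,
            push_of_dec c2 (show w2 = (p ++ [b]) ++ invL σ :: v by rw [h2, ht1, ← hα]; simp)]
          rw [hq]
          have e : (p ++ [b]) ++ v = p ++ b :: v := by simp
          rw [e]
          exact .refl _
      | cons x t' =>
          injection ht2 with hx hq
          have c2 : ∀ y ∈ t' ++ b :: a :: v, CommL F σ y := by
            intro y hy
            apply cq
            rw [hq]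
            simp at hy ⊢
            tauto
          rw [push_of_dec cq hp,
            push_of_dec c2 (show w2 = p ++ invL σ :: (t' ++ b :: a :: v) by
              rw [h2, ht1, ← hx]; simp)]
          rw [hq]
          refine .rel _ _ ⟨p ++ t', a, b, v, hc, by simp, by simp⟩
    · cases t with
      | nil =>
          rw [List.append_nil] at ht1
          injection ht2 with ha hbv
          have c2 : ∀ x ∈ v, CommL F σ x := fun x hx => cq x (by rw [← hbv]; simp [hx])
          rw [push_of_dec cq hp,
            push_of_dec c2 (show w2 = (u ++ [b]) ++ invL σ :: v by rw [h2, ← ha]; simp)]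
          rw [ht1, ← hbv]
          have e : (u ++ [b]) ++ v = u ++ b :: v := by simp
          rw [e]
          exact .refl _
      | cons x t'' =>
          injection ht2 with hxa ht2'
          cases t'' with
          | nil =>
              injection ht2' with hb hq
              have c2 : ∀ y ∈ a :: q, CommL F σ y := by
                intro y hy
                rcases List.mem_cons.1 hy with h4 | h4
                · have h3 : CommL F a (invL σ) := by rw [← hb]; exact hc
                  rw [h4]
                  exact (h3.symm : CommL F (invL σ) a)
                · exact cq y h4
              rw [push_of_dec cq hp,
                push_of_dec c2 (show w2 = u ++ invL σ :: (a :: q) by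
                  rw [h2, hb, hq])]
              rw [ht1, ← hxa]
              have e : (u ++ [a]) ++ q = u ++ a :: q := by simp
              rw [e]
              exact .refl _
          | cons y t3 =>
              injection ht2' with hby ht3
              rw [push_of_dec cq hp,
                push_of_dec cq (show w2 = (u ++ b :: a :: t3) ++ invL σ :: q by
                  rw [h2, ht3]; simp)]
              rw [ht1, ← hxa, ← hby]
              refine .rel _ _ ⟨u, a, b, t3 ++ q, hc, by simp, by simp⟩
  · have hd2 : ¬ HasDec F σ w2 := fun h => hd (hasDec_swap (swapR_symm hs) h)
    rw [push_of_not_dec hd, push_of_not_dec hd2]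
    obtain ⟨u, a, b, v, hc, h1, h2⟩ := hs
    exact .rel _ _ ⟨u, a, b, v ++ [σ], hc, by rw [h1]; simp, by rw [h2]; simp⟩
lemma push_sweq {σ : Fin k × Bool} {w1 w2 : List (Fin k × Bool)} (h : SwEq F w1 w2) :
    SwEq F (push F σ w1) (push F σ w2) := by
  induction h with
  | rel _ _ h => exact push_swapR h
  | refl => exact .refl _
  | symm _ _ _ ih => exact .symm _ _ ih
  | trans _ _ _ _ _ ih1 ih2 => exact .trans _ _ _ ih1 ih2

lemma push_push_inv {σ : Fin k × Bool} {w : List (Fin k × Bool)} (hw : Red F w) :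
    SwEq F (push F (invL σ) (push F σ w)) w := by
  by_cases hd : HasDec F σ w
  · obtain ⟨⟨u, v⟩, c, hv⟩ := hd
    rw [push_of_dec c hv]
    have hnd : ¬ HasDec F (invL σ) (u ++ v) := by
      rintro ⟨⟨p, q⟩, cq, he⟩
      rw [invL_invL] at he
      apply hw
      rcases List.append_eq_append_iff.1 he with ⟨t, ht1, ht2⟩ | ⟨t, ht1, ht2⟩
      · refine ⟨u, invL σ, t, q, ?_, ?_⟩
        · intro b hb
          exact (c b (by rw [ht2]; simp [hb]) : CommL F σ b)
        · rw [hv, ht2, invL_invL]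
      · cases t with
        | nil =>
            have hv2 : v = σ :: q := by simpa using ht2.symm
            refine ⟨u, invL σ, [], q, by simp, by rw [hv, hv2]; simp⟩
        | cons x t' =>
            injection ht2 with hx ht2'
            refine ⟨p, σ, t', v, ?_, ?_⟩
            · intro b hb
              exact (cq b (by rw [ht2']; simp [hb]) : CommL F (invL σ) b)
            · rw [hv, ht1, ← hx]
              simp
    rw [push_of_not_dec hnd]
    have h2 := sweq_comm_block (σ := invL σ) v u (fun b hb => (c b hb : CommL F σ b))
    rw [← hv] at h2
    have e : u ++ (v ++ [invL σ]) = (u ++ v) ++ [invL σ] := by simp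
    rw [e] at h2
    exact .symm _ _ h2
  · rw [push_of_not_dec hd]
    have h1 : push F (invL σ) (w ++ [σ]) = w ++ [] :=
      push_of_dec (v := []) (by simp) (by rw [invL_invL])
    rw [h1, List.append_nil]
    exact .refl _

lemma push_comm_dec {σ τ : Fin k × Bool} {w u m v : List (Fin k × Bool)}
    (cv : ∀ b ∈ v, CommL F τ b) (cq : ∀ b ∈ m ++ invL τ :: v, CommL F σ b)
    (hw : w = (u ++ invL σ :: m) ++ invL τ :: v) :
    push F τ (push F σ w) = push F σ (push F τ w) := by
  have h1 : push F σ w = u ++ (m ++ invL τ :: v) := push_of_dec cq (by rw [hw]; simp)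
  have h2 : push F τ (push F σ w) = (u ++ m) ++ v := by
    rw [h1]
    exact push_of_dec cv (by simp)
  have h3 : push F τ w = (u ++ invL σ :: m) ++ v := push_of_dec cv hw
  have h4 : push F σ (push F τ w) = u ++ (m ++ v) := by
    rw [h3]
    refine push_of_dec ?_ (by simp)
    intro b hb
    rcases List.mem_append.1 hb with hb | hb
    · exact cq b (by simp [hb])
    · exact cq b (by simp [hb])
  rw [h2, h4]
  simp

lemma push_comm_aux {σ τ : Fin k × Bool} {w : List (Fin k × Bool)} (hc : CommL F σ τ)
    (hdσ : ¬ HasDec F σ w) :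
    SwEq F (push F τ (push F σ w)) (push F σ (push F τ w)) := by
  rw [push_of_not_dec hdσ]
  by_cases hdτ : HasDec F τ w
  · obtain ⟨⟨u, v⟩, cv, hv⟩ := hdτ
    rw [push_of_dec cv hv]
    have c1 : ∀ b ∈ v ++ [σ], CommL F τ b := by
      intro b hb
      rcases List.mem_append.1 hb with hb | hb
      · exact cv b hb
      · simp at hb
        rw [hb]
        exact hc.symm
    rw [push_of_dec c1 (show w ++ [σ] = u ++ invL τ :: (v ++ [σ]) by rw [hv]; simp)]
    have hnd : ¬ HasDec F σ (u ++ v) := by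
      rintro ⟨⟨p, q⟩, cq, he⟩
      apply hdσ
      rcases List.append_eq_append_iff.1 he with ⟨t, ht1, ht2⟩ | ⟨t, ht1, ht2⟩
      · exact ⟨(u ++ invL τ :: t, q), cq, by rw [hv, ht2]; simp⟩
      · cases t with
        | nil =>
            have hv2 : v = invL σ :: q := by simpa using ht2.symm
            exact ⟨(u ++ [invL τ], q), cq, by rw [hv, hv2]; simp⟩
        | cons x t' =>
            injection ht2 with hx ht2'
            refine ⟨(p, t' ++ invL τ :: v), ?_, by rw [hv, ht1, ← hx]; simp⟩
            intro b hb
            rcases List.mem_append.1 hb with hb | hb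
            · exact cq b (by rw [ht2']; simp [hb])
            · rcases List.mem_cons.1 hb with hb | hb
              · rw [hb]
                exact (hc : CommL F σ (invL τ))
              · exact cq b (by rw [ht2']; simp [hb])
    rw [push_of_not_dec hnd]
    have e : u ++ (v ++ [σ]) = (u ++ v) ++ [σ] := by simp
    rw [e]
    exact .refl _
  · have h1 : ¬ HasDec F τ (w ++ [σ]) := by
      rintro ⟨⟨p, q⟩, cq, he⟩
      apply hdτ
      rcases List.eq_nil_or_concat q with rfl | ⟨q', b, rfl⟩
      · have h3 := List.append_inj' (show w ++ [σ] = p ++ [invL τ] by rw [he]) rfl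
        have h4 : σ = invL τ := by injection h3.2
        exact absurd (congrArg Prod.fst h4) hc.1
      · have h3 := List.append_inj'
          (show w ++ [σ] = (p ++ invL τ :: q') ++ [b] by rw [he]; simp) rfl
        exact ⟨(p, q'), fun x hx => cq x (by simp [hx]), h3.1⟩
    have h2 : ¬ HasDec F σ (w ++ [τ]) := by
      rintro ⟨⟨p, q⟩, cq, he⟩
      apply hdσ
      rcases List.eq_nil_or_concat q with rfl | ⟨q', b, rfl⟩
      · have h3 := List.append_inj' (show w ++ [τ] = p ++ [invL σ] by rw [he]) rfl
        have h4 : τ = invL σ := by injection h3.2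
        exact absurd (congrArg Prod.fst h4).symm hc.1
      · have h3 := List.append_inj'
          (show w ++ [τ] = (p ++ invL σ :: q') ++ [b] by rw [he]; simp) rfl
        exact ⟨(p, q'), fun x hx => cq x (by simp [hx]), h3.1⟩
    rw [push_of_not_dec hdτ, push_of_not_dec h1, push_of_not_dec h2]
    exact .rel _ _ ⟨w, σ, τ, [], hc, by simp, by simp⟩

lemma push_comm {σ τ : Fin k × Bool} {w : List (Fin k × Bool)} (hc : CommL F σ τ) :
    SwEq F (push F τ (push F σ w)) (push F σ (push F τ w)) := by
  by_cases hdσ : HasDec F σ w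
  · by_cases hdτ : HasDec F τ w
    · obtain ⟨⟨p, q⟩, cq, hp⟩ := hdσ
      obtain ⟨⟨u, v⟩, cv, hu⟩ := hdτ
      have he : p ++ invL σ :: q = u ++ invL τ :: v := hp.symm.trans hu
      rcases List.append_eq_append_iff.1 he with ⟨t, ht1, ht2⟩ | ⟨t, ht1, ht2⟩
      · cases t with
        | nil =>
            injection ht2 with h1 _
            exact absurd (congrArg Prod.fst h1) hc.1
        | cons x t' =>
            injection ht2 with hx hq
            have key := push_comm_dec (σ := σ) (τ := τ) (w := w) (u := p) (m := t') (v := v)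
              cv (fun b hb => cq b (by rw [hq]; exact hb))
              (by rw [hp, hq]; simp)
            rw [key]
            exact .refl _
      · cases t with
        | nil =>
            injection ht2 with h1 _
            exact absurd (congrArg Prod.fst h1).symm hc.1
        | cons x t' =>
            injection ht2 with hx hv2
            have key := push_comm_dec (σ := τ) (τ := σ) (w := w) (u := u) (m := t') (v := q)
              (fun b hb => cq b hb) (fun b hb => cv b (by rw [hv2]; exact hb))
              (by rw [hu, hv2]; simp)
            rw [key]
            exact .refl _
    · exact .symm _ _ (push_comm_aux hc.symm hdτ)
  · exact push_comm_aux hc hdσ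

lemma push_comm' {σ τ : Fin k × Bool} {w : List (Fin k × Bool)} (hc : CommL F σ τ) :
    SwEq F (push F σ (push F τ w)) (push F τ (push F σ w)) := .symm _ _ (push_comm hc)
/-! ### The action on swap classes of reduced words -/

lemma red_nil : Red F ([] : List (Fin k × Bool)) := by
  rintro ⟨u, a, v, z, _, h⟩
  cases u <;> simp at h

lemma red_append_left {v z : List (Fin k × Bool)} (h : Red F (v ++ z)) : Red F v := by
  rintro ⟨p, a, q, r, cq, hv⟩
  exact h ⟨p, a, q, r ++ z, cq, by rw [hv]; simp⟩

/-- The type of reduced words. -/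
def RW (k : ℕ) (F : Set (Sym2 (Fin k))) := {w : List (Fin k × Bool) // Red F w}

def rwSetoid (k : ℕ) (F : Set (Sym2 (Fin k))) : Setoid (RW k F) where
  r a b := SwEq F a.1 b.1
  iseqv := ⟨fun _ => .refl _, fun h => .symm _ _ h, fun h1 h2 => .trans _ _ _ h1 h2⟩

/-- Swap classes of reduced words. -/
abbrev MSp (k : ℕ) (F : Set (Sym2 (Fin k))) := Quotient (rwSetoid k F)

noncomputable def pushRW (σ : Fin k × Bool) (a : RW k F) : RW k F :=
  ⟨push F σ a.1, red_push a.2⟩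

noncomputable def pushM (σ : Fin k × Bool) : MSp k F → MSp k F :=
  Quotient.map (pushRW σ) (fun _ _ h => push_sweq h)

def nilRW : RW k F := ⟨[], red_nil⟩

lemma pushM_pushM_inv (σ : Fin k × Bool) (m : MSp k F) :
    pushM (invL σ) (pushM σ m) = m := by
  induction m using Quotient.inductionOn with
  | h a => exact Quotient.sound (push_push_inv a.2)

noncomputable def permM (i : Fin k) : Equiv.Perm (MSp k F) where
  toFun := pushM (i, true)
  invFun := pushM (i, false)
  left_inv m := pushM_pushM_inv (i, true) m
  right_inv m := pushM_pushM_inv (i, false) m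

lemma permM_commute {i j : Fin k} (hij : i ≠ j) (hF : s(i, j) ∉ F) :
    Commute (permM (F := F) i) (permM j) := by
  have hc : CommL F (j, true) (i, true) :=
    ⟨fun h => hij (by simpa using h.symm), by rw [Sym2.eq_swap]; exact hF⟩
  show permM (F := F) i * permM j = permM j * permM i
  ext m
  induction m using Quotient.inductionOn with
  | h a =>
      show pushM (i, true) (pushM (j, true) ⟦a⟧) = pushM (j, true) (pushM (i, true) ⟦a⟧)
      exact Quotient.sound (push_comm hc)

noncomputable def Phi : Grp k F →* Equiv.Perm (MSp k F) :=
  PresentedGroup.toGroup (f := fun i => permM i) (by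
    rintro r ⟨i, j, hij, hF, rfl⟩
    simp only [map_mul, map_inv, FreeGroup.lift_apply_of]
    rw [← commutatorElement_def, commutatorElement_eq_one_iff_commute]
    exact permM_commute hij hF)

lemma Phi_sym_apply (a : Fin k × Bool) (m : MSp k F) :
    Phi (sym k F a) m = pushM a m := by
  cases a with | mk i b =>
  cases b
  · have h1 : Phi (sym k F (i, false)) = (permM (F := F) i)⁻¹ := by
      have : sym k F (i, false) = (gen k F i)⁻¹ := by simp [sym]
      rw [this, map_inv]
      have h2 : Phi (gen k F i) = permM (F := F) i := PresentedGroup.toGroup.of _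
      rw [h2]
    rw [h1]
    rfl
  · have h1 : Phi (sym k F (i, true)) = permM (F := F) i := by
      have : sym k F (i, true) = gen k F i := by simp [sym]
      rw [this]
      exact PresentedGroup.toGroup.of _
    rw [h1]
    rfl

lemma Phi_wordProd_apply (w : List (Fin k × Bool)) (m : MSp k F) :
    Phi (wordProd k F w) m = w.foldr pushM m := by
  induction w with
  | nil => rw [wordProd_nil, map_one]; rfl
  | cons a t ih =>
      rw [wordProd_cons, map_mul, List.foldr_cons, Equiv.Perm.mul_apply, ih, Phi_sym_apply]

lemma foldr_reverse_red (v : List (Fin k × Bool)) (hv : Red F v) :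
    v.reverse.foldr pushM (Quotient.mk (rwSetoid k F) nilRW) =
      Quotient.mk (rwSetoid k F) ⟨v, hv⟩ := by
  induction v using List.reverseRecOn with
  | nil => rfl
  | append_singleton v' a ih =>
      have hv' : Red F v' := red_append_left hv
      have hstep : v' ++ [a] = push F a v' := by
        rw [push_of_not_dec]
        rintro ⟨⟨p, q⟩, cq, hp⟩
        exact hv ⟨p, invL a, q, [], fun b hb => (cq b hb : CommL F (invL a) b),
          by rw [hp]; simp⟩
      rw [List.reverse_append]
      simp only [List.reverse_cons, List.reverse_nil, List.nil_append, List.singleton_append,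
        List.foldr_cons]
      rw [ih hv']
      show Quotient.mk (rwSetoid k F) (pushRW a ⟨v', hv'⟩) = _
      congr 1
      exact Subtype.ext hstep.symm

theorem red_length_unique {w1 w2 : List (Fin k × Bool)} (h1 : Red F w1) (h2 : Red F w2)
    (he : wordProd k F w1 = wordProd k F w2) : w1.length = w2.length := by
  have r1 : Red F w1.reverse := red_reverse h1
  have r2 : Red F w2.reverse := red_reverse h2
  have e1 : w1.foldr pushM (Quotient.mk (rwSetoid k F) nilRW) =
      Quotient.mk (rwSetoid k F) ⟨w1.reverse, r1⟩ := by
    have := foldr_reverse_red w1.reverse r1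
    rwa [List.reverse_reverse] at this
  have e2 : w2.foldr pushM (Quotient.mk (rwSetoid k F) nilRW) =
      Quotient.mk (rwSetoid k F) ⟨w2.reverse, r2⟩ := by
    have := foldr_reverse_red w2.reverse r2
    rwa [List.reverse_reverse] at this
  have key : Quotient.mk (rwSetoid k F) ⟨w1.reverse, r1⟩ =
      Quotient.mk (rwSetoid k F) ⟨w2.reverse, r2⟩ := by
    rw [← e1, ← e2, ← Phi_wordProd_apply, ← Phi_wordProd_apply, he]
  have hsw : SwEq F w1.reverse w2.reverse := Quotient.exact key
  have := sweq_length hsw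
  simpa using this

theorem red_length_eq_len {w : List (Fin k × Bool)} (h : Red F w) :
    w.length = len (wordProd k F w) := by
  obtain ⟨g, hg, hgl⟩ := exists_min_word (wordProd k F w)
  have hgr : Red F g := red_of_min (by rw [hg, hgl])
  rw [red_length_unique h hgr hg.symm, hgl]

theorem cp_of_not_geodesic {w : List (Fin k × Bool)} (h : len (wordProd k F w) < w.length) :
    CP F w := by
  by_contra hred
  rw [← red_length_eq_len hred] at h
  omega
/-! ### Order and metric lemmas -/

lemma le_refl' (x : Grp k F) : le x x := by
  unfold le
  rw [inv_mul_cancel, len_one]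
  omega

lemma len_triangle (x y z : Grp k F) :
    len (x⁻¹ * z) ≤ len (x⁻¹ * y) + len (y⁻¹ * z) := by
  have := len_mul_le (x⁻¹ * y) (y⁻¹ * z)
  rwa [show (x⁻¹ * y) * (y⁻¹ * z) = x⁻¹ * z by group] at this

lemma len_le_add (x y : Grp k F) : len y ≤ len x + len (x⁻¹ * y) := by
  have := len_mul_le x (x⁻¹ * y)
  rwa [show x * (x⁻¹ * y) = y by group] at this

lemma le_trans' {x y z : Grp k F} (h1 : le x y) (h2 : le y z) : le x z := by
  unfold le at *
  have t1 := len_triangle x y z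
  have t2 := len_le_add x z
  omega

lemma eq_of_le_of_len_le {x y : Grp k F} (h : le y x) (hl : len x ≤ len y) : y = x := by
  unfold le at h
  have h0 : len (y⁻¹ * x) = 0 := by omega
  have h1 := eq_one_of_len_eq_zero h0
  exact (inv_mul_eq_one.1 h1)

lemma exists_minimal {S : Set (Grp k F)} {s : Grp k F} (hs : s ∈ S) :
    ∃ m, MinimalIn S m ∧ le m s := by
  have hne : {n | ∃ x, (x ∈ S ∧ le x s) ∧ len x = n}.Nonempty :=
    ⟨len s, s, ⟨hs, le_refl' s⟩, rfl⟩
  obtain ⟨m, ⟨hmS, hms⟩, hlen⟩ := Nat.sInf_mem hne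
  refine ⟨m, ⟨hmS, ?_⟩, hms⟩
  intro z hz hzm
  have hzs : le z s := le_trans' hzm hms
  have hle : sInf {n | ∃ x, (x ∈ S ∧ le x s) ∧ len x = n} ≤ len z :=
    Nat.sInf_le ⟨z, ⟨hz, hzs⟩, rfl⟩
  exact eq_of_le_of_len_le hzm (by omega)

lemma len_sym_le (c : Fin k × Bool) : len (sym k F c) ≤ 1 := by
  simpa using len_le (wordProd_singleton c)

lemma minimal_unique {S : Set (Grp k F)}
    (hconv : ∀ x z y : Grp k F, x ∈ S → z ∈ S → dist x y + dist y z = dist x z → y ∈ S)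
    {m1 m2 : Grp k F} (h1 : MinimalIn S m1) (h2 : MinimalIn S m2) : m1 = m2 := by
  by_contra hne
  have hnle : ¬ le m1 m2 := fun h => hne (h2.2 m1 h1.1 h)
  have htri : len m2 ≤ len m1 + len (m1⁻¹ * m2) := len_le_add m1 m2
  have hlt : len m2 < len m1 + len (m1⁻¹ * m2) := lt_of_le_of_ne htri hnle
  obtain ⟨u1, hu1p, hu1l⟩ := exists_min_word m1
  obtain ⟨w, hwp, hwl⟩ := exists_min_word (m1⁻¹ * m2)
  have hu1red : Red F u1 := red_of_min (by rw [hu1p, hu1l])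
  have hwred : Red F w := red_of_min (by rw [hwp, hwl])
  have hW : wordProd k F (u1 ++ w) = m2 := by
    rw [wordProd_append, hu1p, hwp]
    group
  have hcp : CP F (u1 ++ w) :=
    cp_of_not_geodesic (by rw [hW, List.length_append, hu1l, hwl]; exact hlt)
  obtain ⟨p, c, q, r, cq, he⟩ := hcp
  -- the "cross" case: c occurs in u1, invL c occurs in w
  have cross : ∀ q1 q2 : List (Fin k × Bool), (∀ b ∈ q1, CommL F c b) →
      (∀ b ∈ q2, CommL F c b) → u1 = p ++ c :: q1 → w = q2 ++ invL c :: r → False := by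
    intro q1 q2 cq1 cq2 hu1 hw
    set y := wordProd k F (p ++ q1) with hy
    have hc1 : sym k F c * wordProd k F q1 = wordProd k F q1 * sym k F c :=
      (wordProd_commute cq1).eq
    have hc2 : sym k F c * wordProd k F q2 = wordProd k F q2 * sym k F c :=
      (wordProd_commute cq2).eq
    have hm1 : m1 = y * sym k F c := by
      rw [← hu1p, hu1, hy, wordProd_append, wordProd_cons, wordProd_append, hc1, mul_assoc]
    have hylen : len y + 1 ≤ len m1 := by
      have h5 := congrArg List.length hu1
      simp at h5
      have h6 : len y ≤ (p ++ q1).length := len_le hy.symm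
      simp at h6
      omega
    have key2 : sym k F c * wordProd k F w = wordProd k F (q2 ++ r) := by
      rw [hw, wordProd_append, wordProd_cons, sym_invL, wordProd_append]
      calc sym k F c * (wordProd k F q2 * ((sym k F c)⁻¹ * wordProd k F r))
          = (sym k F c * wordProd k F q2) * ((sym k F c)⁻¹ * wordProd k F r) := by group
        _ = (wordProd k F q2 * sym k F c) * ((sym k F c)⁻¹ * wordProd k F r) := by rw [hc2]
        _ = wordProd k F q2 * wordProd k F r := by group
    have hym1 : y⁻¹ * m1 = sym k F c := by rw [hm1]; group
    have hym2 : y⁻¹ * m2 = wordProd k F (q2 ++ r) := by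
      have e0 : y⁻¹ * m2 = (y⁻¹ * m1) * (m1⁻¹ * m2) := by group
      rw [e0, hym1, ← hwp, key2]
    have hlen2 : len (y⁻¹ * m2) + 1 ≤ len (m1⁻¹ * m2) := by
      have h6 : len (y⁻¹ * m2) ≤ (q2 ++ r).length := len_le hym2.symm
      have h7 := congrArg List.length hw
      simp at h6 h7
      omega
    have hd1 : len (m1⁻¹ * y) ≤ 1 := by
      have e0 : m1⁻¹ * y = sym k F (invL c) := by rw [hm1, sym_invL]; group
      rw [e0]
      exact len_sym_le _
    have htr2 := len_triangle m1 y m2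
    have hdeq : dist m1 y + dist y m2 = dist m1 m2 := by
      unfold dist
      omega
    have hyS : y ∈ S := hconv m1 m2 y h1.1 h2.1 hdeq
    have hley : le y m1 := by
      unfold le
      have t1 : len (y⁻¹ * m1) ≤ 1 := by rw [hym1]; exact len_sym_le _
      have t2 := len_le_add y m1
      omega
    have := h1.2 y hyS hley
    rw [this] at hylen
    omega
  -- case analysis on the position of the cancelling pair
  rcases List.append_eq_append_iff.1 he with ⟨t, ht1, ht2⟩ | ⟨t, ht1, ht2⟩
  · exact hwred ⟨t, c, q, r, cq, ht2⟩
  · cases t with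
    | nil =>
        have hw2 : w = c :: (q ++ invL c :: r) := by simpa using ht2.symm
        exact hwred ⟨[], c, q, r, cq, by rw [hw2]; rfl⟩
    | cons x t' =>
        injection ht2 with hx ht2'
        rcases List.append_eq_append_iff.1 ht2' with ⟨s, hs1, hs2⟩ | ⟨s, hs1, hs2⟩
        · cases s with
          | nil =>
              have hw2 : w = invL c :: r := by simpa using hs2.symm
              rw [List.append_nil] at hs1
              exact cross q [] cq (by simp) (by rw [ht1, ← hx, hs1]) (by simp [hw2])
          | cons d s' =>
              injection hs2 with hd hs2'
              exact hu1red ⟨p, c, q, s', cq,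
                by rw [ht1, ← hx, hs1, ← hd]⟩
        · exact cross t' s (fun b hb => cq b (by rw [hs1]; simp [hb]))
            (fun b hb => cq b (by rw [hs1]; simp [hb]))
            (by rw [ht1, ← hx]) hs2
/-- a nonempty `L` is convex iff for each `a`, the set `aL` has a
unique minimal element w.r.t. `≤`. -/
theorem stmt6 {k : ℕ} (hk : 1 ≤ k) {F : Set (Sym2 (Fin k))}
    (L : Set (Grp k F)) (hL : L.Nonempty) :
    ConvexSet L ↔ ∀ a : Grp k F, ∃! m, MinimalIn ((a * ·) '' L) m := by
  constructor
  · rintro ⟨hne, hcv⟩ a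
    have hconv : ∀ x z y : Grp k F, x ∈ (a * ·) '' L → z ∈ (a * ·) '' L →
        dist x y + dist y z = dist x z → y ∈ (a * ·) '' L := by
      rintro x z y ⟨x0, hx0, rfl⟩ ⟨z0, hz0, rfl⟩ hd
      refine ⟨a⁻¹ * y, hcv x0 z0 (a⁻¹ * y) hx0 hz0 ?_, by group⟩
      have e1 : x0⁻¹ * (a⁻¹ * y) = (a * x0)⁻¹ * y := by group
      have e2 : (a⁻¹ * y)⁻¹ * z0 = y⁻¹ * (a * z0) := by group
      have e3 : x0⁻¹ * z0 = (a * x0)⁻¹ * (a * z0) := by group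
      unfold dist at hd ⊢
      rw [e1, e2, e3]
      exact hd
    obtain ⟨s0, hs0⟩ := hL
    obtain ⟨m, hm, _⟩ := exists_minimal (show a * s0 ∈ (a * ·) '' L from ⟨s0, hs0, rfl⟩)
    exact ⟨m, hm, fun m' hm' => minimal_unique hconv hm' hm⟩
  · intro h
    refine ⟨hL, ?_⟩
    intro x z y hx hz hd
    obtain ⟨m, hm, huniq⟩ := h y⁻¹
    have hleast : ∀ s ∈ (y⁻¹ * ·) '' L, le m s := by
      intro s hs
      obtain ⟨m', hm', hle⟩ := exists_minimal hs
      rw [← huniq m' hm']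
      exact hle
    have h1 : le m (y⁻¹ * x) := hleast _ ⟨x, hx, rfl⟩
    have h2 : le m (y⁻¹ * z) := hleast _ ⟨z, hz, rfl⟩
    unfold le at h1 h2
    have e1 : len (y⁻¹ * x) = len (x⁻¹ * y) := by
      rw [← len_inv]
      congr 1
      group
    have htr : len (x⁻¹ * z) ≤ len (m⁻¹ * (y⁻¹ * x)) + len (m⁻¹ * (y⁻¹ * z)) := by
      have h3 := len_mul_le ((m⁻¹ * (y⁻¹ * x))⁻¹) (m⁻¹ * (y⁻¹ * z))
      rwa [show (m⁻¹ * (y⁻¹ * x))⁻¹ * (m⁻¹ * (y⁻¹ * z)) = x⁻¹ * z by group, len_inv] at h3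
    unfold dist at hd
    have hm0 : len m = 0 := by omega
    have hm1 : m = 1 := eq_one_of_len_eq_zero hm0
    obtain ⟨x0, hx0, hx0e⟩ := hm.1
    have hxy : x0 = y := by
      rw [hm1] at hx0e
      exact (inv_mul_eq_one.1 hx0e).symm
    rwa [hxy] at hx0

end GraphGroupPaper
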